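/- Let n ≥ 1, let R be the free ℤ-module with basis (E_ν)_{ν∈ℤ^n} and multiplication E_ν·E_{ν′} = E_{ν+ν′} if (ν_i−ν_j)(ν′_i−ν′_j) ≥ 0 for all i,j, and 0 otherwise. For σ ∈ S_n let pr_σ : R → ℤ[M_σ] be the surjective ring homomorphism with pr_σ(E_ν) = e^ν if ν ∈ M_σ = {ν : ν_{σ(1)} ≤ … ≤ ν_{σ(n)}} and 0 otherwise. Then each kernel ker(pr_σ) is a prime ideal of R, and every maximal ideal of R contains ker(pr_σ) for some σ ∈ S_n; consequently the minimal prime ideals of R are exactly the ideals ker(pr_σ). -/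

import Mathlib

/-- `ν` and `ν'` are chamber-compatible: `(ν_i - ν_j)(ν'_i - ν'_j) ≥ 0` for all `i, j`. -/
def ChamberCompat {n : ℕ} (ν ν' : Fin n → ℤ) : Prop :=
  ∀ i j, 0 ≤ (ν i - ν j) * (ν' i - ν' j)

instance {n : ℕ} (ν ν' : Fin n → ℤ) : Decidable (ChamberCompat ν ν') :=
  inferInstanceAs (Decidable (∀ i j, 0 ≤ (ν i - ν j) * (ν' i - ν' j)))

/-- The multiplication on `R = ⊕_{ν ∈ ℤ^n} ℤ·E_ν`, with `E_ν = Finsupp.single ν 1`: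
`E_ν · E_{ν'} = E_{ν+ν'}` if `ν, ν'` are chamber-compatible, and `0` otherwise. -/
noncomputable def vmul {n : ℕ} (f g : (Fin n → ℤ) →₀ ℤ) : (Fin n → ℤ) →₀ ℤ :=
  f.sum fun ν a => g.sum fun ν' b =>
    if ChamberCompat ν ν' then Finsupp.single (ν + ν') (a * b) else 0

/-- The submonoid `M_σ = {ν : ν_{σ(1)} ≤ … ≤ ν_{σ(n)}}` of `ℤ^n`. -/
def chamberMonoid {n : ℕ} (σ : Equiv.Perm (Fin n)) : AddSubmonoid (Fin n → ℤ) where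
  carrier := {ν | Monotone fun i => ν (σ i)}
  add_mem' := fun ha hb => ha.add hb
  zero_mem' := monotone_const

open scoped Classical in
/-- The chamber projection `pr_σ : R → ℤ[M_σ]`, with `pr_σ(E_ν) = e^ν` if `ν ∈ M_σ`
and `pr_σ(E_ν) = 0` otherwise. -/
noncomputable def prj {n : ℕ} (σ : Equiv.Perm (Fin n)) (f : (Fin n → ℤ) →₀ ℤ) :
    AddMonoidAlgebra ℤ (chamberMonoid σ) :=
  f.sum fun ν a =>
    if h : Monotone fun i => ν (σ i) then
      AddMonoidAlgebra.single (⟨ν, h⟩ : chamberMonoid σ) a else 0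

/-- An ideal of `R` (for the multiplication `vmul`). -/
def IsIdealR {n : ℕ} (I : Set ((Fin n → ℤ) →₀ ℤ)) : Prop :=
  (0 : (Fin n → ℤ) →₀ ℤ) ∈ I ∧
  (∀ f g, f ∈ I → g ∈ I → f + g ∈ I) ∧
  (∀ f, f ∈ I → -f ∈ I) ∧
  (∀ f g, g ∈ I → vmul f g ∈ I)

/-- A prime ideal of `R`: a proper ideal such that `fg ∈ I` implies `f ∈ I` or `g ∈ I`. -/
def IsPrimeIdealR {n : ℕ} (I : Set ((Fin n → ℤ) →₀ ℤ)) : Prop :=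
  IsIdealR I ∧ (Finsupp.single 0 1 : (Fin n → ℤ) →₀ ℤ) ∉ I ∧
  ∀ f g, vmul f g ∈ I → f ∈ I ∨ g ∈ I

/-- A maximal ideal of `R`: a proper ideal maximal among proper ideals. -/
def IsMaximalIdealR {n : ℕ} (I : Set ((Fin n → ℤ) →₀ ℤ)) : Prop :=
  IsIdealR I ∧ (Finsupp.single 0 1 : (Fin n → ℤ) →₀ ℤ) ∉ I ∧
  ∀ J : Set ((Fin n → ℤ) →₀ ℤ), IsIdealR J → I ⊆ J → J = I ∨ J = Set.univ

/-- The kernel of the chamber projection `pr_σ`. -/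
noncomputable def kerPrj {n : ℕ} (σ : Equiv.Perm (Fin n)) : Set ((Fin n → ℤ) →₀ ℤ) :=
  {f | prj σ f = 0}

open scoped Classical

namespace Stmt6Aux

variable {n : ℕ}

abbrev Rn (n : ℕ) := (Fin n → ℤ) →₀ ℤ

lemma compat_of_mem {σ : Equiv.Perm (Fin n)} {ν ν' : Fin n → ℤ}
    (hν : Monotone fun i => ν (σ i)) (hν' : Monotone fun i => ν' (σ i)) :
    ChamberCompat ν ν' := by
  intro i j
  rcases le_total (σ.symm i) (σ.symm j) with h | h
  · have h1 : ν i ≤ ν j := by simpa using hν h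
    have h2 : ν' i ≤ ν' j := by simpa using hν' h
    nlinarith
  · have h1 : ν j ≤ ν i := by simpa using hν h
    have h2 : ν' j ≤ ν' i := by simpa using hν' h
    nlinarith

lemma mem_of_add_mem {σ : Equiv.Perm (Fin n)} {ν ν' : Fin n → ℤ} (hc : ChamberCompat ν ν')
    (h : Monotone fun i => (ν + ν') (σ i)) :
    (Monotone fun i => ν (σ i)) ∧ (Monotone fun i => ν' (σ i)) := by
  constructor <;> intro a b hab <;>
  · have h1 := hc (σ a) (σ b)
    have h2 := h hab
    simp only [Pi.add_apply] at h2
    nlinarith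

lemma prj_zero (σ : Equiv.Perm (Fin n)) : prj σ (0 : Rn n) = 0 := Finsupp.sum_zero_index

lemma prj_single (σ : Equiv.Perm (Fin n)) (ν : Fin n → ℤ) (a : ℤ) :
    prj σ (Finsupp.single ν a) =
      if h : Monotone fun i => ν (σ i) then AddMonoidAlgebra.single (⟨ν, h⟩ : chamberMonoid σ) a
      else 0 :=
  Finsupp.sum_single_index (by split <;> simp)

lemma prj_add (σ : Equiv.Perm (Fin n)) (f g : Rn n) : prj σ (f + g) = prj σ f + prj σ g :=
  Finsupp.sum_add_index' (fun ν => by split <;> simp)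
    (fun ν a b => by split <;> simp [AddMonoidAlgebra.single_add])

noncomputable def prjHom (σ : Equiv.Perm (Fin n)) :
    Rn n →+ AddMonoidAlgebra ℤ (chamberMonoid σ) where
  toFun := prj σ
  map_zero' := prj_zero σ
  map_add' := prj_add σ

lemma prj_apply (σ : Equiv.Perm (Fin n)) (f : Rn n) {ν : Fin n → ℤ}
    (h : Monotone fun i => ν (σ i)) : (prj σ f).coeff ⟨ν, h⟩ = f ν := by
  rw [prj, AddMonoidAlgebra.coeff_finsuppSum, Finsupp.sum_apply]
  have key : (f.sum fun μ a =>
      (if hm : Monotone fun i => μ (σ i) then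
        AddMonoidAlgebra.single (⟨μ, hm⟩ : chamberMonoid σ) a else 0).coeff ⟨ν, h⟩)
      = f.sum fun μ a => if μ = ν then a else 0 := by
    apply Finsupp.sum_congr
    intro μ _
    split
    · rename_i hm
      rw [AddMonoidAlgebra.coeff_single, Finsupp.single_apply]
      simp [Subtype.ext_iff, eq_comm]
    · rename_i hm
      have hne : μ ≠ ν := fun e => hm (by simpa [e] using h)
      simp [hne]
  rw [key, Finsupp.sum, Finset.sum_ite_eq' f.support ν (fun μ => f μ)]
  split
  · rfl
  · rename_i hns
    exact (Finsupp.notMem_support_iff.mp hns).symm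

lemma prj_eq_zero_iff (σ : Equiv.Perm (Fin n)) (f : Rn n) :
    prj σ f = 0 ↔ ∀ ν, (Monotone fun i => ν (σ i)) → f ν = 0 := by
  constructor
  · intro h0 ν hν
    rw [← prj_apply σ f hν, h0]
    simp
  · intro h
    rw [prj]
    rw [Finsupp.sum]
    apply Finset.sum_eq_zero
    intro μ _
    split
    · rename_i hm
      rw [h μ hm, AddMonoidAlgebra.single_zero]
    · rfl

lemma prj_injective (f g : Rn n) (h : ∀ σ : Equiv.Perm (Fin n), prj σ f = prj σ g) :
    f = g := by
  ext ν
  have hm : Monotone fun i => ν (Tuple.sort ν i) := Tuple.monotone_sort ν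
  rw [← prj_apply (Tuple.sort ν) f hm, ← prj_apply (Tuple.sort ν) g hm, h]

lemma prj_piece (σ : Equiv.Perm (Fin n)) (ν ν' : Fin n → ℤ) (a b : ℤ) :
    prj σ (if ChamberCompat ν ν' then Finsupp.single (ν + ν') (a * b) else 0) =
    (if h : Monotone fun i => ν (σ i) then
       AddMonoidAlgebra.single (⟨ν, h⟩ : chamberMonoid σ) a
     else 0 : AddMonoidAlgebra ℤ (chamberMonoid σ)) *
    (if h : Monotone fun i => ν' (σ i) then
       AddMonoidAlgebra.single (⟨ν', h⟩ : chamberMonoid σ) b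
     else 0 : AddMonoidAlgebra ℤ (chamberMonoid σ)) := by
  by_cases hν : Monotone fun i => ν (σ i) <;>
    by_cases hν' : Monotone fun i => ν' (σ i)
  · rw [dif_pos hν, dif_pos hν', if_pos (compat_of_mem hν hν'), prj_single,
      dif_pos (show Monotone fun i => (ν + ν') (σ i) from
        fun a b hab => add_le_add (hν hab) (hν' hab)),
      AddMonoidAlgebra.single_mul_single]
    rfl
  · rw [dif_pos hν, dif_neg hν', mul_zero]
    split
    · rename_i hc
      rw [prj_single, dif_neg fun hm => hν' (mem_of_add_mem hc hm).2]
    · exact prj_zero σ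
  · rw [dif_neg hν, dif_pos hν', zero_mul]
    split
    · rename_i hc
      rw [prj_single, dif_neg fun hm => hν (mem_of_add_mem hc hm).1]
    · exact prj_zero σ
  · rw [dif_neg hν, zero_mul]
    split
    · rename_i hc
      rw [prj_single, dif_neg fun hm => hν (mem_of_add_mem hc hm).1]
    · exact prj_zero σ

lemma prj_vmul (σ : Equiv.Perm (Fin n)) (f g : Rn n) :
    prj σ (vmul f g) = prj σ f * prj σ g := by
  have h1 : prj σ (vmul f g) = f.sum fun ν a => g.sum fun ν' b =>
      prj σ (if ChamberCompat ν ν' then Finsupp.single (ν + ν') (a * b) else 0) := by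
    rw [vmul]
    calc prjHom σ (f.sum fun ν a => g.sum fun ν' b =>
            if ChamberCompat ν ν' then Finsupp.single (ν + ν') (a * b) else 0)
        = f.sum fun ν a => prjHom σ (g.sum fun ν' b =>
            if ChamberCompat ν ν' then Finsupp.single (ν + ν') (a * b) else 0) :=
          map_finsuppSum _ _ _
      _ = _ := Finsupp.sum_congr fun ν _ => map_finsuppSum _ _ _
  rw [h1]
  conv_rhs => rw [prj, prj, Finsupp.sum_mul]
  refine Finsupp.sum_congr fun ν _ => ?_
  rw [Finsupp.mul_sum]
  exact Finsupp.sum_congr fun ν' _ => prj_piece σ ν ν' (f ν) (g ν')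


lemma prj_one (σ : Equiv.Perm (Fin n)) :
    prj σ (Finsupp.single (0 : Fin n → ℤ) 1) = 1 := by
  rw [prj_single,
    dif_pos (show Monotone fun i => (0 : Fin n → ℤ) (σ i) from monotone_const),
    AddMonoidAlgebra.one_def]
  rfl

lemma prj_neg (σ : Equiv.Perm (Fin n)) (f : Rn n) : prj σ (-f) = -prj σ f :=
  map_neg (prjHom σ) f

lemma vmul_comm' (f g : Rn n) : vmul f g = vmul g f :=
  prj_injective _ _ fun σ => by rw [prj_vmul, prj_vmul, mul_comm]

lemma vmul_assoc' (f g h : Rn n) : vmul (vmul f g) h = vmul f (vmul g h) :=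
  prj_injective _ _ fun σ => by
    rw [prj_vmul, prj_vmul, prj_vmul, prj_vmul, mul_assoc]

lemma vmul_add' (f g h : Rn n) : vmul f (g + h) = vmul f g + vmul f h :=
  prj_injective _ _ fun σ => by
    rw [prj_vmul, prj_add, prj_add, prj_vmul, prj_vmul, mul_add]

lemma neg_vmul' (f g : Rn n) : vmul (-f) g = -vmul f g :=
  prj_injective _ _ fun σ => by
    rw [prj_vmul, prj_neg, prj_neg, prj_vmul, neg_mul]

lemma vmul_one' (f : Rn n) : vmul f (Finsupp.single 0 1) = f :=
  prj_injective _ _ fun σ => by rw [prj_vmul, prj_one, mul_one]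

lemma one_vmul' (f : Rn n) : vmul (Finsupp.single 0 1) f = f :=
  prj_injective _ _ fun σ => by rw [prj_vmul, prj_one, one_mul]

lemma zero_vmul' (f : Rn n) : vmul 0 f = 0 := by
  rw [vmul, Finsupp.sum_zero_index]

lemma vmul_rot (f g r : Rn n) : vmul g (vmul r f) = vmul r (vmul f g) :=
  prj_injective _ _ fun σ => by
    rw [prj_vmul, prj_vmul, prj_vmul, prj_vmul]
    ring

lemma vmul_single_single (ν ν' : Fin n → ℤ) (a b : ℤ) :
    vmul (Finsupp.single ν a) (Finsupp.single ν' b) =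
      if ChamberCompat ν ν' then Finsupp.single (ν + ν') (a * b) else 0 := by
  rw [vmul, Finsupp.sum_single_index, Finsupp.sum_single_index]
  · split <;> simp
  · rw [Finsupp.sum]
    apply Finset.sum_eq_zero
    intro μ _
    split <;> simp

lemma single_eq_vmul (ν : Fin n → ℤ) (a : ℤ) :
    Finsupp.single ν a = vmul (Finsupp.single 0 a) (Finsupp.single ν 1) := by
  rw [vmul_single_single, if_pos, zero_add, mul_one]
  intro i j
  simp

lemma mem_of_forall_single {I : Set (Rn n)} (hI : IsIdealR I) (f : Rn n)
    (h : ∀ ν ∈ f.support, Finsupp.single ν (f ν) ∈ I) : f ∈ I := by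
  have hs := Finsupp.sum_single f
  rw [← hs, Finsupp.sum]
  exact Finset.sum_induction _ (· ∈ I) (fun a b ha hb => hI.2.1 a b ha hb) hI.1 h

lemma exists_chamber (S : Set (Fin n → ℤ))
    (hS : ∀ ν ∈ S, ∀ ν' ∈ S, ChamberCompat ν ν') :
    ∃ σ : Equiv.Perm (Fin n), ∀ ν ∈ S, Monotone fun i => ν (σ i) := by
  set Rel : Fin n → Fin n → Prop := fun i j => ∀ ν ∈ S, ν i ≤ ν j with hRel
  have htot : ∀ i j, Rel i j ∨ Rel j i := by
    intro i j
    by_contra hc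
    push_neg at hc
    obtain ⟨h1, h2⟩ := hc
    simp only [hRel] at h1 h2
    push_neg at h1 h2
    obtain ⟨ν, hν, hlt1⟩ := h1
    obtain ⟨ν', hν', hlt2⟩ := h2
    have := hS ν hν ν' hν' i j
    nlinarith
  have htrans : ∀ i j k, Rel i j → Rel j k → Rel i k :=
    fun i j k h1 h2 ν hν => (h1 ν hν).trans (h2 ν hν)
  set g : Fin n → ℕ :=
    fun i => (Finset.univ.filter fun k => Rel k i ∧ ¬ Rel i k).card with hg
  have key : ∀ i j, g i ≤ g j → Rel i j := by
    intro i j hgij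
    by_contra hij
    have hji : Rel j i := (htot i j).resolve_left hij
    have hsubset : (Finset.univ.filter fun k => Rel k j ∧ ¬ Rel j k) ⊆
        (Finset.univ.filter fun k => Rel k i ∧ ¬ Rel i k) := by
      intro k hk
      simp only [Finset.mem_filter, Finset.mem_univ, true_and] at hk ⊢
      exact ⟨htrans k j i hk.1 hji, fun h => hk.2 (htrans j i k hji h)⟩
    have hss : (Finset.univ.filter fun k => Rel k j ∧ ¬ Rel j k) ⊂
        (Finset.univ.filter fun k => Rel k i ∧ ¬ Rel i k) := by
      rw [Finset.ssubset_iff_of_subset hsubset]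
      refine ⟨j, ?_, ?_⟩
      · simp only [Finset.mem_filter, Finset.mem_univ, true_and]
        exact ⟨hji, hij⟩
      · simp only [Finset.mem_filter, Finset.mem_univ, true_and]
        intro hcon
        exact hcon.2 fun ν _ => le_rfl
    have := Finset.card_lt_card hss
    simp only [hg] at hgij
    omega
  refine ⟨Tuple.sort g, fun ν hν a b hab => ?_⟩
  exact key _ _ (Tuple.monotone_sort g hab) ν hν

lemma maximal_primeLike {I : Set (Rn n)} (hI : IsMaximalIdealR I) :
    ∀ f g, vmul f g ∈ I → f ∈ I ∨ g ∈ I := by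
  obtain ⟨hid, hproper, hmax⟩ := hI
  intro f g hfg
  by_cases hf : f ∈ I
  · exact Or.inl hf
  right
  set J : Set (Rn n) := {y | ∃ x ∈ I, ∃ r, y = x + vmul r f} with hJ
  have hJideal : IsIdealR J := by
    refine ⟨⟨0, hid.1, 0, by rw [zero_vmul', add_zero]⟩, ?_, ?_, ?_⟩
    · rintro _ _ ⟨x, hx, r, rfl⟩ ⟨x', hx', r', rfl⟩
      refine ⟨x + x', hid.2.1 _ _ hx hx', r + r', ?_⟩
      rw [show vmul (r + r') f = vmul f (r + r') from vmul_comm' _ _, vmul_add',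
        vmul_comm' f r, vmul_comm' f r']
      abel
    · rintro _ ⟨x, hx, r, rfl⟩
      exact ⟨-x, hid.2.2.1 _ hx, -r, by rw [neg_vmul']; abel⟩
    · rintro s _ ⟨x, hx, r, rfl⟩
      exact ⟨vmul s x, hid.2.2.2 s x hx, vmul s r,
        by rw [vmul_add', vmul_assoc']⟩
  have hIJ : I ⊆ J := fun x hx => ⟨x, hx, 0, by rw [zero_vmul', add_zero]⟩
  have hfJ : f ∈ J := ⟨0, hid.1, Finsupp.single 0 1, by rw [one_vmul', zero_add]⟩
  rcases hmax J hJideal hIJ with hJI | huniv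
  · exact absurd (hJI ▸ hfJ) hf
  · have h1 : (Finsupp.single 0 1 : Rn n) ∈ J := huniv ▸ Set.mem_univ _
    obtain ⟨x, hx, r, hr⟩ := h1
    have hg : g = vmul g x + vmul r (vmul f g) := by
      calc g = vmul g (Finsupp.single 0 1) := (vmul_one' g).symm
        _ = vmul g (x + vmul r f) := by rw [← hr]
        _ = vmul g x + vmul g (vmul r f) := vmul_add' _ _ _
        _ = vmul g x + vmul r (vmul f g) := by rw [vmul_rot]
    rw [hg]
    exact hid.2.1 _ _ (hid.2.2.2 g x hx) (hid.2.2.2 r _ hfg)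

lemma ker_subset {I : Set (Rn n)} (hI : IsIdealR I)
    (hpl : ∀ f g, vmul f g ∈ I → f ∈ I ∨ g ∈ I) :
    ∃ σ : Equiv.Perm (Fin n), kerPrj σ ⊆ I := by
  have hcompat : ∀ ν ∈ {ν | Finsupp.single ν 1 ∉ I},
      ∀ ν' ∈ {ν | Finsupp.single ν 1 ∉ I}, ChamberCompat ν ν' := by
    intro ν hν ν' hν'
    simp only [Set.mem_setOf_eq] at hν hν'
    by_contra hc
    have h0 : vmul (Finsupp.single ν 1) (Finsupp.single ν' 1) ∈ I := by
      rw [vmul_single_single, if_neg hc]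
      exact hI.1
    rcases hpl _ _ h0 with h | h
    · exact hν h
    · exact hν' h
  obtain ⟨σ, hσ⟩ := exists_chamber _ hcompat
  refine ⟨σ, fun f hf => ?_⟩
  have hker : ∀ ν, (Monotone fun i => ν (σ i)) → f ν = 0 :=
      (prj_eq_zero_iff σ f).mp hf
  apply mem_of_forall_single hI
  intro ν hν
  by_cases hm : Monotone fun i => ν (σ i)
  · rw [hker ν hm, Finsupp.single_zero]
    exact hI.1
  · have hsI : Finsupp.single ν 1 ∈ I := by
      by_contra hc
      exact hm (hσ ν hc)
    rw [single_eq_vmul]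
    exact hI.2.2.2 _ _ hsI

noncomputable instance (σ : Equiv.Perm (Fin n)) : UniqueSums (chamberMonoid σ) :=
  UniqueSums.of_injective_addHom (chamberMonoid σ).subtype.toAddHom
    Subtype.coe_injective inferInstance

lemma ker_prime (σ : Equiv.Perm (Fin n)) : IsPrimeIdealR (kerPrj (n := n) σ) := by
  refine ⟨⟨prj_zero σ, ?_, ?_, ?_⟩, ?_, ?_⟩
  · intro f g hf hg
    show prj σ (f + g) = 0
    rw [prj_add, show prj σ f = 0 from hf, show prj σ g = 0 from hg, add_zero]
  · intro f hf
    show prj σ (-f) = 0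
    rw [prj_neg, show prj σ f = 0 from hf, neg_zero]
  · intro f g hg
    show prj σ (vmul f g) = 0
    rw [prj_vmul, show prj σ g = 0 from hg, mul_zero]
  · show ¬ prj σ (Finsupp.single 0 1) = 0
    rw [prj_one]
    exact one_ne_zero
  · intro f g hfg
    have h0 : prj σ f * prj σ g = 0 := by
      rw [← prj_vmul]
      exact hfg
    rcases mul_eq_zero.mp h0 with h | h
    · exact Or.inl h
    · exact Or.inr h

lemma ker_min (σ : Equiv.Perm (Fin n)) {Q : Set (Rn n)} (hQ : IsPrimeIdealR Q)
    (hsub : Q ⊆ kerPrj σ) : kerPrj σ ⊆ Q := by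
  set μ : Fin n → ℤ := fun j => ((σ.symm j : ℕ) : ℤ) with hμ
  have hμmem : Monotone fun i => μ (σ i) := by
    intro a b hab
    simp only [hμ, Equiv.symm_apply_apply]
    exact_mod_cast hab
  intro f hf
  apply mem_of_forall_single hQ.1
  intro ν hν
  have hνnm : ¬ Monotone fun i => ν (σ i) := by
    intro hm
    exact Finsupp.mem_support_iff.mp hν ((prj_eq_zero_iff σ f).mp hf ν hm)
  have hEν : Finsupp.single ν 1 ∈ Q := by
    have hnc : ¬ ChamberCompat ν μ := by
      rw [Monotone] at hνnm
      push_neg at hνnm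
      obtain ⟨a, b, hab, hlt⟩ := hνnm
      intro hc
      have h1 := hc (σ a) (σ b)
      have h2 : μ (σ a) < μ (σ b) := by
        simp only [hμ, Equiv.symm_apply_apply]
        have hne : a ≠ b := by
          rintro rfl
          exact lt_irrefl _ hlt
        have : (a : ℕ) < (b : ℕ) := Fin.lt_iff_val_lt_val.mp (lt_of_le_of_ne hab hne)
        exact_mod_cast this
      nlinarith
    have h0 : vmul (Finsupp.single ν 1) (Finsupp.single μ 1) ∈ Q := by
      rw [vmul_single_single, if_neg hnc]
      exact hQ.1.1
    rcases hQ.2.2 _ _ h0 with h | h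
    · exact h
    · exfalso
      have hk : prj σ (Finsupp.single μ 1) = 0 := hsub h
      rw [prj_single, dif_pos hμmem] at hk
      exact one_ne_zero (AddMonoidAlgebra.single_eq_zero.mp hk)
  rw [single_eq_vmul]
  exact hQ.1.2.2.2 _ _ hEν


end Stmt6Aux

open Stmt6Aux in
theorem stmt6 (n : ℕ) (hn : 1 ≤ n) :
    (∀ σ : Equiv.Perm (Fin n), IsPrimeIdealR (kerPrj σ)) ∧
    (∀ I : Set ((Fin n → ℤ) →₀ ℤ), IsMaximalIdealR I →
      ∃ σ : Equiv.Perm (Fin n), kerPrj σ ⊆ I) ∧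
    (∀ P : Set ((Fin n → ℤ) →₀ ℤ),
      (IsPrimeIdealR P ∧ ∀ Q : Set ((Fin n → ℤ) →₀ ℤ), IsPrimeIdealR Q → Q ⊆ P → Q = P) ↔
      ∃ σ : Equiv.Perm (Fin n), P = kerPrj σ) := by
  refine ⟨fun σ => ker_prime σ,
    fun I hI => ker_subset hI.1 (maximal_primeLike hI), fun P => ?_⟩
  constructor
  · rintro ⟨hP, hmin⟩
    obtain ⟨σ, hσ⟩ := ker_subset hP.1 hP.2.2
    exact ⟨σ, (hmin (kerPrj σ) (ker_prime σ) hσ).symm⟩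
  · rintro ⟨σ, rfl⟩
    exact ⟨ker_prime σ, fun Q hQ hQsub =>
      Set.Subset.antisymm hQsub (ker_min σ hQ hQsub)⟩
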